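/- Let P be a preMealy machine with state set M, let ∼ be an equivalence relation on M, and let p = (x, y, i) and p' = (x', y', i') be two distinct non-congruent points for ∼ such that U(∼, p) ≠ U(∼, p'). Then p' is a non-congruent point for U(∼, p), p is a non-congruent point for U(∼, p'), and U(U(∼, p), p') = U(U(∼, p'), p). In particular, the rewriting relation on equivalence relations that removes one non-congruent point is locally confluent. -/
import Mathlib


open scoped Classical

/-- A preMealy machine over input alphabet `I`, output alphabet `O`, with state type `M`. -/
structure PreMealy (I O M : Type) where
  init : M
  trans : M → I → Option (O × M)

namespace PreMealy

variable {I O M : Type}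

/-- One step of a preMealy machine on a pair (input, output): defined iff the transition
on the input is defined and produces exactly the given output. -/
noncomputable def step (P : PreMealy I O M) (m : M) (p : I × O) : Option M :=
  match P.trans m p.1 with
  | some (o, m') => if o = p.2 then some m' else none
  | none => none

/-- Running a preMealy machine on a finite word of (input, output) pairs. -/
noncomputable def runFrom (P : PreMealy I O M) : M → List (I × O) → Option M
  | m, [] => some m
  | m, p :: u =>
    match P.step m p with
    | some m' => runFrom P m' u
    | none => none

/-- The language `L(P)` of finite words in `(I·O)*` accepted by `P`. -/
def lang (P : PreMealy I O M) : Set (List (I × O)) :=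
  { u | (P.runFrom P.init u).isSome }

/-- The ω-language `L_ω(P)`: ω-words all of whose finite prefixes belong to `L(P)`. -/
def omegaLang (P : PreMealy I O M) : Set (ℕ → I × O) :=
  { w | ∀ n : ℕ, ((List.range n).map w) ∈ P.lang }

/-- `P` is a (complete) Mealy machine when its transition function is total. -/
def Total (P : PreMealy I O M) : Prop :=
  ∀ m i, (P.trans m i).isSome

/-- A hole of `P` is a pair (state, input) on which the transition is undefined. -/
def Hole (P : PreMealy I O M) (m : M) (i : I) : Prop :=
  P.trans m i = none

/-- `Left_p`: the set of finite words reaching state `p` from the initial state. -/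
def leftLang (P : PreMealy I O M) (p : M) : Set (List (I × O)) :=
  { u | P.runFrom P.init u = some p }

end PreMealy

/-- `P₁ ⪯ P₂`: `P₁` is a subgraph of `P₂`. -/
def Subgraph {I O M₁ M₂ : Type} (P₁ : PreMealy I O M₁) (P₂ : PreMealy I O M₂) : Prop :=
  ∃ Φ : M₁ → M₂, Function.Injective Φ ∧ Φ P₁.init = P₂.init ∧
    ∀ p i o q, P₁.trans p i = some (o, q) ↔ P₂.trans (Φ p) i = some (o, Φ q)

/-- `S` is `P`-realizable: some (finite-state, complete) Mealy machine extends `P`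
and its ω-language is included in `S ⊆ (I·O)^ω`. -/
def PRealizable {I O M : Type} (P : PreMealy I O M) (S : Set (ℕ → I × O)) : Prop :=
  ∃ (N : Type) (_ : Fintype N) (Mach : PreMealy I O N),
    Mach.Total ∧ Subgraph P Mach ∧ Mach.omegaLang ⊆ S

/-- Quotient (left derivative) of a set of ω-words by a finite word. -/
def wordQuot {α : Type} (u : List α) (S : Set (ℕ → α)) : Set (ℕ → α) :=
  { v | (fun n => if h : n < u.length then u.get ⟨n, h⟩ else v (n - u.length)) ∈ S }

/-- Interleaving of an ω-word over `I × O` into an ω-word over `Σ = I ⊕ O`. -/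
def interleave {I O : Type} (w : ℕ → I × O) : ℕ → I ⊕ O :=
  fun n => if n % 2 = 0 then Sum.inl (w (n / 2)).1 else Sum.inr (w (n / 2)).2

/-- Flattening of a finite word over `I × O` into a word over `Σ = I ⊕ O`. -/
def flattenWord {I O : Type} (u : List (I × O)) : List (I ⊕ O) :=
  u.flatMap fun p => [Sum.inl p.1, Sum.inr p.2]

/-- `P`-realizability of a specification over `Σ = I ⊕ O`. -/
def PRealizableSigma {I O M : Type} (P : PreMealy I O M) (S : Set (ℕ → I ⊕ O)) : Prop :=
  ∃ (N : Type) (_ : Fintype N) (Mach : PreMealy I O N),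
    Mach.Total ∧ Subgraph P Mach ∧ ∀ w ∈ Mach.omegaLang, interleave w ∈ S

/-- Realizability of a specification over `Σ = I ⊕ O` by some Mealy machine. -/
def RealizableSigma (I O : Type) (S : Set (ℕ → I ⊕ O)) : Prop :=
  ∃ (N : Type) (_ : Fintype N) (Mach : PreMealy I O N),
    Mach.Total ∧ ∀ w ∈ Mach.omegaLang, interleave w ∈ S

/-- A universal coBüchi automaton; `col1 q` means state `q` has color 1. -/
structure UCB (σ Q : Type) where
  init : Set Q
  δ : Q → σ → Set Q
  δ_ne : ∀ q a, (δ q a).Nonempty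
  col1 : Q → Prop

namespace UCB

variable {σ Q : Type}

/-- `ρ` is a run of `A` on the ω-word `w`. -/
def Run (A : UCB σ Q) (w : ℕ → σ) (ρ : ℕ → Q) : Prop :=
  ρ 0 ∈ A.init ∧ ∀ n, ρ (n + 1) ∈ A.δ (ρ n) (w n)

/-- `L^∀_k(A)`: every run visits 1-colored states at most `k` times. -/
def langK (A : UCB σ Q) (k : ℕ) : Set (ℕ → σ) :=
  { w | ∀ ρ : ℕ → Q, A.Run w ρ →
      ∀ s : Finset ℕ, (∀ j ∈ s, A.col1 (ρ j)) → s.card ≤ k }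

/-- `L^∀(A)`: every run visits 1-colored states only finitely often. -/
def langForall (A : UCB σ Q) : Set (ℕ → σ) :=
  { w | ∀ ρ : ℕ → Q, A.Run w ρ → { j | A.col1 (ρ j) }.Finite }

/-- A run prefix of `A` on a finite word `p` (only `ρ 0, …, ρ p.length` are relevant). -/
def RunPrefix (A : UCB σ Q) (p : List σ) (ρ : ℕ → Q) : Prop :=
  ρ 0 ∈ A.init ∧ ∀ (j : ℕ) (h : j < p.length), ρ (j + 1) ∈ A.δ (ρ j) (p.get ⟨j, h⟩)

/-- The set of states reachable from a set of states while reading a finite word. -/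
def postSet (A : UCB σ Q) : Set Q → List σ → Set Q
  | S, [] => S
  | S, a :: u => postSet A (⋃ q ∈ S, A.δ q a) u

end UCB

/-- The set `CF(A,k)` of `k`-counting functions, as integer-valued functions. -/
def CFset (Q : Type) (k : ℕ) : Set (Q → ℤ) :=
  { f | ∀ q, -1 ≤ f q ∧ f q ≤ (k : ℤ) + 1 }

/-- The transition function `δ^D` of the determinization `D(A,k)` on counting functions. -/
noncomputable def detTransFun {σ Q : Type} [Fintype Q] (A : UCB σ Q) (k : ℕ)
    (f : Q → ℤ) (a : σ) : Q → ℤ := fun q =>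
  let pred : Finset Q := Finset.univ.filter fun q' => q ∈ A.δ q' a ∧ 0 ≤ f q'
  if h : pred.Nonempty then
    min (pred.sup' h f + (if A.col1 q then 1 else 0)) ((k : ℤ) + 1)
  else -1

/-- The (unique) run of `D(A,k)` on an ω-word `w`, starting from `f`. -/
noncomputable def detRun {σ Q : Type} [Fintype Q] (A : UCB σ Q) (k : ℕ)
    (f : Q → ℤ) (w : ℕ → σ) : ℕ → Q → ℤ
  | 0 => f
  | n + 1 => detTransFun A k (detRun A k f w n) (w n)

/-- The state of `D(A,k)` reached from `f` after reading a finite word. -/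
noncomputable def detPostW {σ Q : Type} [Fintype Q] (A : UCB σ Q) (k : ℕ) :
    (Q → ℤ) → List σ → Q → ℤ
  | f, [] => f
  | f, a :: u => detPostW A k (detTransFun A k f a) u

/-- The initial counting function `f₀` of `D(A,k)`. -/
noncomputable def initCF {σ Q : Type} (A : UCB σ Q) : Q → ℤ := fun q =>
  if q ∈ A.init then (if A.col1 q then 1 else 0) else -1

/-- `L(D(A,k)[f])`: ω-words whose run of `D(A,k)` from `f` never visits an unsafe
counting function (one taking the value `k+1`). -/
def langD {σ Q : Type} [Fintype Q] (A : UCB σ Q) (k : ℕ) (f : Q → ℤ) :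
    Set (ℕ → σ) :=
  { w | ∀ n, ¬ ∃ q, detRun A k f w n q = (k : ℤ) + 1 }

/-- A complete deterministic safety automaton: the set `bad` of unsafe states is a trap. -/
structure DetSafety (σ Q : Type) where
  start : Q
  δ : Q → σ → Q
  bad : Set Q
  trap : ∀ q ∈ bad, ∀ a, δ q a ∈ bad

namespace DetSafety

variable {σ Q : Type}

/-- State reached after reading a finite word. -/
def postW (A : DetSafety σ Q) : Q → List σ → Q
  | q, [] => q
  | q, a :: u => postW A (A.δ q a) u

/-- The run of a deterministic automaton on an ω-word. -/
def runOn (A : DetSafety σ Q) (w : ℕ → σ) : ℕ → Q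
  | 0 => A.start
  | n + 1 => A.δ (runOn A w n) (w n)

/-- The (safety) ω-language: the run never enters an unsafe state. -/
def omegaLang (A : DetSafety σ Q) : Set (ℕ → σ) :=
  { w | ∀ n, runOn A w n ∉ A.bad }

end DetSafety

/-- A complete deterministic automaton (no acceptance condition). -/
structure DetAuto (σ Q : Type) where
  start : Q
  δ : Q → σ → Q

/-- State reached after reading a finite word. -/
def DetAuto.postW {σ Q : Type} (A : DetAuto σ Q) : Q → List σ → Q
  | q, [] => q
  | q, a :: u => DetAuto.postW A (A.δ q a) u

/-- Domination order between collections: every element of `A` is below some element of `B`. -/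
def acLE {α : Type} (r : α → α → Prop) (A B : Set α) : Prop :=
  ∀ x ∈ A, ∃ y ∈ B, r x y

/-- Downward closure of a collection of subsets of `Y`. -/
def dcl {Y : Type} (A : Set (Set Y)) : Set (Set Y) :=
  { X | ∃ X' ∈ A, X ⊆ X' }

/-- The merged relation `U(∼, p)` for a non-congruent point with successors `s, s'`. -/
def Umerge {M : Type} (r : M → M → Prop) (s s' : M) : M → M → Prop :=
  fun y y' => r y y' ∨ (r y s ∧ r y' s') ∨ (r y' s ∧ r y s')

/-- Prefix closure of a set of finite words over `I × O`. -/
def prefsE {I O : Type} (E : Set (List (I × O))) : Set (List (I × O)) :=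
  { u | ∃ e ∈ E, u <+: e }

/-- Consistency of a set of examples: the output is uniquely determined by each
prefix ending with an input. -/
def ConsistentE {I O : Type} (E : Set (List (I × O))) : Prop :=
  ∀ (u : List (I × O)) (i : I) (o o' : O),
    (u ++ [(i, o)]) ∈ prefsE E → (u ++ [(i, o')]) ∈ prefsE E → o = o'

/-- The prefix-tree acceptor `PTA(E)`: states are the prefixes of `E` (together with ε). -/
noncomputable def PTA {I O : Type} (E : Set (List (I × O))) :
    PreMealy I O (↥(insert ([] : List (I × O)) (prefsE E))) where
  init := ⟨[], Set.mem_insert _ _⟩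
  trans := fun u i =>
    if h : ∃ o : O, (u.1 ++ [(i, o)]) ∈ prefsE E then
      some (h.choose, ⟨u.1 ++ [(i, h.choose)], Set.mem_insert_of_mem _ h.choose_spec⟩)
    else none

/-- The fixpoint labelling `F*` of the states of a preMealy machine by counting functions. -/
noncomputable def Fstar {I O M Q : Type} [Fintype Q] (P : PreMealy I O M)
    (A : UCB (I ⊕ O) Q) (k : ℕ) (m : M) : Q → ℤ := fun q =>
  sSup (insert (-1 : ℤ)
    { z | ∃ u ∈ P.leftLang m, detPostW A k (initCF A) (flattenWord u) q = z })

section UmergeAux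

variable {M : Type} {r : M → M → Prop}

lemma umerge_congr (hr : Equivalence r) {s s' t t' : M} (h1 : r s t) (h2 : r s' t') :
    Umerge r s s' = Umerge r t t' := by
  funext a b
  apply propext
  unfold Umerge
  constructor
  · rintro (h | ⟨ha, hb⟩ | ⟨hb, ha⟩)
    · exact Or.inl h
    · exact Or.inr (Or.inl ⟨hr.trans ha h1, hr.trans hb h2⟩)
    · exact Or.inr (Or.inr ⟨hr.trans hb h1, hr.trans ha h2⟩)
  · rintro (h | ⟨ha, hb⟩ | ⟨hb, ha⟩)
    · exact Or.inl h
    · exact Or.inr (Or.inl ⟨hr.trans ha (hr.symm h1), hr.trans hb (hr.symm h2)⟩)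
    · exact Or.inr (Or.inr ⟨hr.trans hb (hr.symm h1), hr.trans ha (hr.symm h2)⟩)

lemma umerge_swap (s s' : M) : Umerge r s s' = Umerge r s' s := by
  funext a b; apply propext; unfold Umerge; tauto

lemma umerge_symm (hsym : ∀ a b, r a b → r b a) {s s' a b : M}
    (h : Umerge r s s' a b) : Umerge r s s' b a := by
  rcases h with h | h | h
  · exact Or.inl (hsym _ _ h)
  · exact Or.inr (Or.inr h)
  · exact Or.inr (Or.inl h)

/-- The conjunction case of the commutation lemma. -/
lemma umerge_key2 (hr : Equivalence r) {sx sy tx ty a b : M} (ht : ¬ r tx ty)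
    (ha : Umerge r sx sy a tx) (hb : Umerge r sx sy b ty) :
    Umerge (Umerge r tx ty) sx sy a b := by
  rcases ha with ha | ⟨hasx, htxsy⟩ | ⟨htxsx, hasy⟩ <;>
    rcases hb with hb | ⟨hbsx, htysy⟩ | ⟨htysx, hbsy⟩
  · exact Or.inl (Or.inr (Or.inl ⟨ha, hb⟩))
  · exact Or.inr (Or.inr ⟨Or.inl hbsx, Or.inr (Or.inl ⟨ha, hr.symm htysy⟩)⟩)
  · exact Or.inr (Or.inl ⟨Or.inr (Or.inl ⟨ha, hr.symm htysx⟩), Or.inl hbsy⟩)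
  · exact Or.inr (Or.inl ⟨Or.inl hasx, Or.inr (Or.inr ⟨hr.symm htxsy, hb⟩)⟩)
  · exact absurd (hr.trans htxsy (hr.symm htysy)) ht
  · exact Or.inr (Or.inl ⟨Or.inl hasx, Or.inl hbsy⟩)
  · exact Or.inr (Or.inr ⟨Or.inr (Or.inr ⟨hr.symm htxsx, hb⟩), Or.inl hasy⟩)
  · exact Or.inr (Or.inr ⟨Or.inl hbsx, Or.inl hasy⟩)
  · exact absurd (hr.trans htxsx (hr.symm htysx)) ht

/-- Forward direction of commutation of two merges. -/
lemma umerge_key (hr : Equivalence r) {sx sy tx ty a b : M} (ht : ¬ r tx ty)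
    (h : Umerge (Umerge r sx sy) tx ty a b) :
    Umerge (Umerge r tx ty) sx sy a b := by
  rcases h with h | ⟨ha, hb⟩ | ⟨hb, ha⟩
  · rcases h with h | ⟨hax, hby⟩ | ⟨hbx, hay⟩
    · exact Or.inl (Or.inl h)
    · exact Or.inr (Or.inl ⟨Or.inl hax, Or.inl hby⟩)
    · exact Or.inr (Or.inr ⟨Or.inl hbx, Or.inl hay⟩)
  · exact umerge_key2 hr ht ha hb
  · have h1 : Umerge (Umerge r tx ty) sx sy b a := umerge_key2 hr ht hb ha
    have hsym : ∀ u v, Umerge r tx ty u v → Umerge r tx ty v u :=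
      fun _ _ h => umerge_symm (fun _ _ => hr.symm) h
    exact umerge_symm hsym h1

end UmergeAux

/-- local confluence of the removal of non-congruent points. If
`p = (x,y,i)` and `p' = (x',y',i')` are distinct non-congruent points for `r` with
`U(r,p) ≠ U(r,p')`, then `p'` is non-congruent for `U(r,p)`, `p` is non-congruent for
`U(r,p')`, and `U(U(r,p),p') = U(U(r,p'),p)`. -/
theorem stmt11 {I O M : Type} (P : PreMealy I O M) (r : M → M → Prop)
    (hr : Equivalence r)
    (x y : M) (i : I) (x' y' : M) (i' : I)
    (ox oy : O) (sx sy : M) (ox' oy' : O) (tx ty : M)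
    (hxd : P.trans x i = some (ox, sx)) (hyd : P.trans y i = some (oy, sy))
    (hx'd : P.trans x' i' = some (ox', tx)) (hy'd : P.trans y' i' = some (oy', ty))
    (hxy : r x y) (hncp : ¬ r sx sy)
    (hx'y' : r x' y') (hncp' : ¬ r tx ty)
    (hdist : (x, y, i) ≠ (x', y', i'))
    (hUne : Umerge r sx sy ≠ Umerge r tx ty) :
    (Umerge r sx sy x' y' ∧ ¬ Umerge r sx sy tx ty) ∧
    (Umerge r tx ty x y ∧ ¬ Umerge r tx ty sx sy) ∧
    (∀ a b, Umerge (Umerge r sx sy) tx ty a b ↔ Umerge (Umerge r tx ty) sx sy a b) := by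
  refine ⟨⟨Or.inl hx'y', ?_⟩, ⟨Or.inl hxy, ?_⟩, fun a b =>
    ⟨umerge_key hr hncp', umerge_key hr hncp⟩⟩
  · rintro (h | ⟨h1, h2⟩ | ⟨h1, h2⟩)
    · exact hncp' h
    · exact hUne (umerge_congr hr (hr.symm h1) (hr.symm h2))
    · exact hUne ((umerge_congr hr (hr.symm h1) (hr.symm h2)).trans (umerge_swap ty tx))
  · rintro (h | ⟨h1, h2⟩ | ⟨h1, h2⟩)
    · exact hncp h
    · exact hUne.symm (umerge_congr hr (hr.symm h1) (hr.symm h2))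
    · exact hUne.symm ((umerge_congr hr (hr.symm h1) (hr.symm h2)).trans (umerge_swap sy sx))
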